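/- For every n, q ≥ 2, and 0 ≤ m ≤ n, the number A_{n,q}(m) of ordered pairs (S,T) ∈ S_{n,q}² with deletion distance exactly m equals c_{q,m} · binomial(n-m+q-1, q-1), where c_{q,m} = Σ_{j=0}^{min(m,q-1)} binomial(q-1,j)² · binomial(m-j+q-2, q-2) (with the convention c_{q,0} = 1). -/

import Mathlib

def simplex (n q : ℕ) : Finset (Fin q → ℕ) := Finset.Nat.antidiagonalTuple q n

def delDist {q : ℕ} (x y : Fin q → ℕ) : ℕ := ∑ i, (x i - y i)

def ball (n q r : ℕ) (x : Fin q → ℕ) : Finset (Fin q → ℕ) :=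
  (simplex n q).filter (fun y => delDist x y ≤ r)

open Finset

lemma mem_simplex {n q : ℕ} {x : Fin q → ℕ} : x ∈ simplex n q ↔ ∑ i, x i = n :=
  Finset.Nat.mem_antidiagonalTuple

lemma card_simplex (m r : ℕ) : (simplex m (r + 1)).card = (m + r).choose r := by
  induction r generalizing m with
  | zero => simp [simplex, Finset.Nat.antidiagonalTuple_one]
  | succ r ih =>
    rw [Finset.card_eq_sum_card_fiberwise (f := fun f => f 0) (t := range (m + 1))
      (fun x hx => by
        rw [Finset.mem_coe, mem_simplex] at hx
        rw [Finset.mem_coe, mem_range, Nat.lt_succ_iff, ← hx]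
        exact Finset.single_le_sum (fun i _ => Nat.zero_le _) (mem_univ 0))]
    have hfib : ∀ t ∈ range (m + 1),
        ((simplex m (r + 2)).filter (fun f => f 0 = t)).card = (m - t + r).choose r := by
      intro t ht
      rw [mem_range, Nat.lt_succ_iff] at ht
      rw [← ih (m - t)]
      apply Finset.card_nbij' (i := fun f => Fin.tail f) (j := fun g => Fin.cons t g)
      · intro a ha
        simp only [Finset.mem_coe, mem_filter, mem_simplex] at ha
        obtain ⟨h1, h2⟩ := ha
        rw [Fin.sum_univ_succ] at h1
        rw [Finset.mem_coe, mem_simplex]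
        simp only [Fin.tail]
        omega
      · intro g hg
        rw [Finset.mem_coe, mem_simplex, Fin.sum_univ_succ] at hg
        simp only [Finset.mem_coe, mem_filter, mem_simplex, Fin.sum_univ_succ, Fin.cons_zero, Fin.cons_succ]
        exact ⟨by omega, trivial⟩
      · intro a ha
        simp only [Finset.mem_coe, mem_filter] at ha
        rw [← ha.2]
        exact Fin.cons_self_tail a
      · intro g _
        rfl
    rw [Finset.sum_congr rfl hfib]
    rw [show (m + (r + 1)).choose (r + 1) = ((m + r) + 1).choose (r + 1) by ring_nf,
      ← Nat.sum_Icc_choose (m + r) r]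
    apply Finset.sum_nbij' (i := fun t => m - t + r) (j := fun x => m + r - x)
    · intro t ht; rw [mem_range] at ht; rw [mem_Icc]; omega
    · intro x hx; rw [mem_Icc] at hx; rw [mem_range]; omega
    · intro t ht; rw [mem_range] at ht; omega
    · intro x hx; rw [mem_Icc] at hx; omega
    · intro t ht; rfl

/-- Count of compositions supported inside `K`. -/
lemma card_supported {q : ℕ} (m c : ℕ) (K : Finset (Fin q)) (hK : K.card = c + 1) :
    ((simplex m q).filter (fun f => ∀ i ∉ K, f i = 0)).card = (m + c).choose c := by
  rw [← card_simplex m c]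
  have e : Fin (c + 1) ≃o {x // x ∈ K} := K.orderIsoOfFin hK
  have hj : ∀ (g : Fin (c + 1) → ℕ),
      ∑ i : Fin q, (if h : i ∈ K then g (e.symm ⟨i, h⟩) else 0) = ∑ t, g t := by
    intro g
    rw [← Finset.sum_subset (Finset.subset_univ K)
      (fun i _ hi => by simp only [dif_neg hi]), ← Finset.sum_coe_sort K]
    refine Fintype.sum_equiv e.symm.toEquiv _ _ (fun x => ?_)
    rw [dif_pos x.2]
    exact congrArg (fun y => g (e.symm y)) (Subtype.coe_eta x x.2)
  apply Finset.card_nbij' (i := fun f => fun t => f (e t))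
    (j := fun g => fun i => if h : i ∈ K then g (e.symm ⟨i, h⟩) else 0)
  · intro f hf
    simp only [Finset.mem_coe, mem_filter, mem_simplex] at hf
    rw [Finset.mem_coe, mem_simplex]
    have h1 : ∑ t : Fin (c + 1), f (e t) = ∑ x : {x // x ∈ K}, f x :=
      Fintype.sum_equiv e.toEquiv _ _ (fun t => rfl)
    rw [h1, Finset.sum_coe_sort K f, ← hf.1]
    exact Finset.sum_subset (Finset.subset_univ K) (fun i _ hi => hf.2 i hi)
  · intro g hg
    rw [Finset.mem_coe, mem_simplex] at hg
    simp only [Finset.mem_coe, mem_filter, mem_simplex]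
    refine ⟨by rw [hj g]; exact hg, fun i hi => dif_neg hi⟩
  · intro f hf
    simp only [Finset.mem_coe, mem_filter, mem_simplex] at hf
    funext i
    by_cases h : i ∈ K
    · simp only [dif_pos h, e.apply_symm_apply]
    · simp only [dif_neg h]
      exact (hf.2 i h).symm
  · intro g _
    funext t
    simp only [dif_pos (e t).2, Subtype.coe_eta, e.symm_apply_apply]

/-- Supported inside the empty set: impossible unless `m = 0`. -/
lemma card_supported_empty {q : ℕ} (m : ℕ) (hm : m ≠ 0) (K : Finset (Fin q)) (hK : K = ∅) :
    ((simplex m q).filter (fun f => ∀ i ∉ K, f i = 0)).card = 0 := by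
  rw [Finset.card_eq_zero, Finset.filter_eq_empty_iff]
  intro f hf hall
  rw [mem_simplex] at hf
  apply hm
  rw [← hf]
  apply Finset.sum_eq_zero
  intro i _
  exact hall i (by simp [hK])

/-- Count of compositions with support exactly `K`. -/
lemma card_exact_support {q : ℕ} (m c : ℕ) (K : Finset (Fin q)) (hK : K.card = c + 1)
    (hm : c + 1 ≤ m) :
    ((simplex m q).filter (fun f => ∀ i, f i ≠ 0 ↔ i ∈ K)).card = (m - 1).choose c := by
  have e1 : m - (c + 1) + c = m - 1 := by omega
  have h2 : ((simplex (m - (c + 1)) q).filter (fun f => ∀ i ∉ K, f i = 0)).card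
      = (m - (c + 1) + c).choose c := card_supported _ c K hK
  rw [e1] at h2
  rw [← h2]
  clear h2
  have hchi : ∑ i : Fin q, (if i ∈ K then 1 else 0) = c + 1 := by
    rw [Finset.sum_ite_mem, Finset.univ_inter, Finset.sum_const, smul_eq_mul, mul_one, hK]
  apply Finset.card_nbij' (i := fun f => fun i => f i - (if i ∈ K then 1 else 0))
    (j := fun g => fun i => g i + (if i ∈ K then 1 else 0))
  · intro f hf
    simp only [Finset.mem_coe, mem_filter, mem_simplex] at hf ⊢
    obtain ⟨h1, hsupp⟩ := hf
    constructor
    · have : ∑ i, (f i - (if i ∈ K then 1 else 0)) + ∑ i : Fin q, (if i ∈ K then 1 else 0)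
          = ∑ i, f i := by
        rw [← Finset.sum_add_distrib]
        apply Finset.sum_congr rfl
        intro i _
        have := hsupp i
        by_cases h : i ∈ K <;> simp [h] at this ⊢ <;> omega
      omega
    · intro i hi
      have := (hsupp i).not.mpr hi
      simp only [if_neg hi]
      omega
  · intro g hg
    simp only [Finset.mem_coe, mem_filter, mem_simplex] at hg ⊢
    obtain ⟨h1, hz⟩ := hg
    constructor
    · rw [Finset.sum_add_distrib, h1, hchi]
      omega
    · intro i
      by_cases h : i ∈ K <;> simp [h, hz i]
  · intro f hf
    simp only [Finset.mem_coe, mem_filter, mem_simplex] at hf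
    funext i
    have := (hf.2 i)
    by_cases h : i ∈ K <;> simp [h] at this ⊢ <;> omega
  · intro g hg
    simp only [Finset.mem_coe, mem_filter, mem_simplex] at hg
    funext i
    by_cases h : i ∈ K <;> simp [h, hg.2 i]

/-- Exact support needs enough mass. -/
lemma card_exact_support_empty {q : ℕ} (m : ℕ) (K : Finset (Fin q)) (hm : m < K.card ∨ (K = ∅ ∧ m ≠ 0)) :
    ((simplex m q).filter (fun f => ∀ i, f i ≠ 0 ↔ i ∈ K)).card = 0 := by
  rw [Finset.card_eq_zero, Finset.filter_eq_empty_iff]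
  intro f hf hall
  rw [mem_simplex] at hf
  rcases hm with hm | ⟨hK, hm⟩
  · have : K.card ≤ ∑ i, f i := by
      calc K.card = ∑ i ∈ K, 1 := by simp
      _ ≤ ∑ i ∈ K, f i := Finset.sum_le_sum (fun i hi => by
          have := (hall i).mpr hi; omega)
      _ ≤ ∑ i, f i := Finset.sum_le_sum_of_subset (Finset.subset_univ K)
    omega
  · apply hm
    rw [← hf]
    apply Finset.sum_eq_zero
    intro i _
    have := (hall i).not.mpr (by simp [hK])
    omega

lemma star1 (u v w : ℕ) :
    (w + u + 1).choose w * (w + u + v + 3).choose (v + 1)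
      + (w + u + 1).choose (w + 1) * (w + u + v + 2).choose v
    = (w + v + 2).choose (w + 1) * (w + u + v + 2).choose (w + v + 1) := by
  have key : ((w + u + 1).choose w * (w + u + v + 3).choose (v + 1)
      + (w + u + 1).choose (w + 1) * (w + u + v + 2).choose v : ℚ)
    = (w + v + 2).choose (w + 1) * (w + u + v + 2).choose (w + v + 1) := by
    rw [Nat.cast_choose ℚ (by omega : w ≤ w + u + 1),
      Nat.cast_choose ℚ (by omega : v + 1 ≤ w + u + v + 3),
      Nat.cast_choose ℚ (by omega : w + 1 ≤ w + u + 1),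
      Nat.cast_choose ℚ (by omega : v ≤ w + u + v + 2),
      Nat.cast_choose ℚ (by omega : w + 1 ≤ w + v + 2),
      Nat.cast_choose ℚ (by omega : w + v + 1 ≤ w + u + v + 2)]
    rw [show w + u + 1 - w = u + 1 by omega, show w + u + v + 3 - (v + 1) = w + u + 2 by omega,
      show w + u + 1 - (w + 1) = u by omega, show w + u + v + 2 - v = w + u + 2 by omega,
      show w + v + 2 - (w + 1) = v + 1 by omega,
      show w + u + v + 2 - (w + v + 1) = u + 1 by omega]
    rw [show w + u + v + 3 = (w + u + v + 2) + 1 by omega]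
    rw [show w + u + 2 = (w + u + 1) + 1 by omega]
    rw [show w + v + 2 = (w + v + 1) + 1 by omega]
    rw [Nat.factorial_succ ((w + u + v + 2)), Nat.factorial_succ (w + u + 1),
      Nat.factorial_succ (w + v + 1), Nat.factorial_succ u, Nat.factorial_succ v,
      Nat.factorial_succ w]
    have h1 : (0:ℚ) < (Nat.factorial w) := by exact_mod_cast Nat.factorial_pos w
    have h2 : (0:ℚ) < (Nat.factorial u) := by exact_mod_cast Nat.factorial_pos u
    have h3 : (0:ℚ) < (Nat.factorial v) := by exact_mod_cast Nat.factorial_pos v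
    have h4 : (0:ℚ) < (Nat.factorial (w + u + 1)) := by exact_mod_cast Nat.factorial_pos (w + u + 1)
    have h5 : (0:ℚ) < (Nat.factorial (w + v + 1)) := by exact_mod_cast Nat.factorial_pos (w + v + 1)
    have h6 : (0:ℚ) < (Nat.factorial (w + u + v + 2)) := by exact_mod_cast Nat.factorial_pos (w + u + v + 2)
    push_cast
    field_simp
    ring
  exact_mod_cast key

lemma star (u v w : ℕ) :
    (w + u).choose w * (w + u + v + 2).choose (v + 1)
      + (w + u).choose (w + 1) * (w + u + v + 1).choose v
    = (w + v + 2).choose (w + 1) * (w + u + v + 1).choose (w + v + 1) := by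
  cases u with
  | zero =>
    have hs : (w + v + 2).choose (v + 1) = (w + v + 2).choose (w + 1) := by
      rw [← Nat.choose_symm (by omega : v + 1 ≤ w + v + 2),
        show w + v + 2 - (v + 1) = w + 1 by omega]
    simp [Nat.choose_self, Nat.choose_eq_zero_of_lt (show w < w + 1 by omega), hs]
  | succ u' =>
    have h := star1 u' v w
    have e1 : w + u' + 1 + v + 2 = w + u' + v + 3 := by omega
    have e2 : w + u' + 1 + v + 1 = w + u' + v + 2 := by omega
    have e3 : w + (u' + 1) = w + u' + 1 := by omega
    rw [e3, e1, e2]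
    exact h

/-- The set of pairs of disjointly-supported compositions of `m`. -/
def disjPairs (q m : ℕ) : Finset ((Fin q → ℕ) × (Fin q → ℕ)) :=
  ((simplex m q) ×ˢ (simplex m q)).filter (fun p => ∀ i, p.1 i = 0 ∨ p.2 i = 0)

lemma partA (n q m : ℕ) (hm : m ≤ n) :
    (((simplex n q) ×ˢ (simplex n q)).filter (fun p => delDist p.1 p.2 = m)).card
      = (disjPairs q m).card * (simplex (n - m) q).card := by
  rw [← Finset.card_product]
  apply Finset.card_nbij'
    (i := fun (p : (Fin q → ℕ) × (Fin q → ℕ)) => ((fun i => p.1 i - p.2 i, fun i => p.2 i - p.1 i), fun i => min (p.1 i) (p.2 i)))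
    (j := fun (x : ((Fin q → ℕ) × (Fin q → ℕ)) × (Fin q → ℕ)) => (fun i => x.2 i + x.1.1 i, fun i => x.2 i + x.1.2 i))
  · intro p hp
    rw [Finset.mem_coe, mem_filter] at hp; simp only [mem_product, mem_simplex, delDist] at hp
    obtain ⟨⟨h1, h2⟩, h3⟩ := hp
    have key1 : ∑ i, p.1 i = ∑ i, min (p.1 i) (p.2 i) + ∑ i, (p.1 i - p.2 i) := by
      rw [← Finset.sum_add_distrib]
      exact Finset.sum_congr rfl (fun i _ => by omega)
    have key2 : ∑ i, p.2 i = ∑ i, min (p.1 i) (p.2 i) + ∑ i, (p.2 i - p.1 i) := by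
      rw [← Finset.sum_add_distrib]
      exact Finset.sum_congr rfl (fun i _ => by omega)
    simp only [Finset.mem_coe, disjPairs, mem_product, mem_filter, mem_simplex]
    refine ⟨⟨⟨h3, by omega⟩, fun i => by omega⟩, by omega⟩
  · intro x hx
    simp only [Finset.mem_coe, disjPairs, mem_product, mem_filter, mem_simplex] at hx
    obtain ⟨⟨⟨ha, hb⟩, hd⟩, hc⟩ := hx
    rw [Finset.mem_coe, mem_filter]; simp only [mem_product, mem_simplex, delDist]
    have e1 : ∑ i, (x.2 i + x.1.1 i) = (n - m) + m := by
      rw [Finset.sum_add_distrib, ha, hc]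
    have e2 : ∑ i, (x.2 i + x.1.2 i) = (n - m) + m := by
      rw [Finset.sum_add_distrib, hb, hc]
    refine ⟨⟨by omega, by omega⟩, ?_⟩
    have : ∀ i, (x.2 i + x.1.1 i) - (x.2 i + x.1.2 i) = x.1.1 i := by
      intro i
      have := hd i
      omega
    rw [Finset.sum_congr rfl (fun i _ => this i)]
    exact ha
  · intro p hp
    simp only [Finset.mem_coe, mem_filter, mem_product, mem_simplex] at hp
    ext
    · simp only []
      omega
    · simp only []
      omega
  · intro x hx
    simp only [Finset.mem_coe, disjPairs, mem_product, mem_filter, mem_simplex] at hx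
    obtain ⟨⟨⟨ha, hb⟩, hd⟩, hc⟩ := hx
    have h : ∀ i, x.1.1 i = 0 ∨ x.1.2 i = 0 := hd
    ext i
    · simp only []
      have := h i
      omega
    · simp only []
      have := h i
      omega
    · simp only []
      have := h i
      omega

lemma star' (j m k : ℕ) (h1 : 1 ≤ j) (hm : j ≤ m) (hk : j ≤ k) :
    (m - 1).choose (j - 1) * (m + (k + 1 - j)).choose (k + 1 - j)
      + (m - 1).choose j * (m + (k - j)).choose (k - j)
    = (k + 1).choose j * (m - j + k).choose k := by
  obtain ⟨w, rfl⟩ : ∃ w, j = w + 1 := ⟨j - 1, by omega⟩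
  obtain ⟨u, rfl⟩ : ∃ u, m = w + 1 + u := ⟨m - (w + 1), by omega⟩
  obtain ⟨v, rfl⟩ : ∃ v, k = w + 1 + v := ⟨k - (w + 1), by omega⟩
  rw [show w + 1 + u - 1 = w + u by omega,
    show w + 1 - 1 = w by omega,
    show w + 1 + v + 1 - (w + 1) = v + 1 by omega,
    show w + 1 + v - (w + 1) = v by omega,
    show w + 1 + u + (v + 1) = w + u + v + 2 by omega,
    show w + 1 + u + v = w + u + v + 1 by omega,
    show w + 1 + v + 1 = w + v + 2 by omega,
    show w + 1 + u - (w + 1) = u by omega,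
    show u + (w + 1 + v) = w + u + v + 1 by omega,
    show w + 1 + v = w + v + 1 by omega]
  exact star u v w

lemma fiber_card (k m : ℕ) (hm : 1 ≤ m) (S : Finset (Fin (k + 2)))
    (hS : S ⊆ Finset.univ.erase (Fin.last (k + 1))) :
    ((disjPairs (k + 2) m).filter
        (fun p => (Finset.univ.filter (fun i => p.1 i ≠ 0)).erase (Fin.last (k + 1)) = S)).card
      = if S.card ≤ m then (k + 1).choose S.card * (m - S.card + k).choose k else 0 := by
  set lst := Fin.last (k + 1) with hlstdef
  have hlstS : lst ∉ S := fun h => by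
    have h2 := hS h
    rw [Finset.mem_erase] at h2
    exact h2.1 rfl
  have hSk : S.card ≤ k + 1 := by
    have h2 := Finset.card_le_card hS
    rwa [Finset.card_erase_of_mem (Finset.mem_univ lst), Finset.card_univ,
      Fintype.card_fin] at h2
  have hcond : ∀ (a : Fin (k + 2) → ℕ),
      ((Finset.univ.filter (fun i => a i ≠ 0)).erase lst = S)
        ↔ (∀ i, i ≠ lst → (a i ≠ 0 ↔ i ∈ S)) := by
    intro a
    rw [Finset.ext_iff]
    simp only [Finset.mem_erase, Finset.mem_filter, Finset.mem_univ, true_and]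
    constructor
    · intro h i hi
      rw [← h i]
      tauto
    · intro h i
      constructor
      · rintro ⟨h1, h2⟩
        exact (h i h1).1 h2
      · intro hiS
        have hne : i ≠ lst := fun e => hlstS (e ▸ hiS)
        exact ⟨hne, (h i hne).2 hiS⟩
  set A0 := (simplex m (k + 2)).filter (fun a => ∀ i, a i ≠ 0 ↔ i ∈ S) with hA0
  set B0 := (simplex m (k + 2)).filter (fun b => ∀ i ∉ Finset.univ \ S, b i = 0) with hB0
  set A1 := (simplex m (k + 2)).filter (fun a => ∀ i, a i ≠ 0 ↔ i ∈ insert lst S) with hA1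
  set B1 := (simplex m (k + 2)).filter
    (fun b => ∀ i ∉ Finset.univ \ insert lst S, b i = 0) with hB1
  set fib := ((disjPairs (k + 2) m).filter
      (fun p => (Finset.univ.filter (fun i => p.1 i ≠ 0)).erase lst = S)) with hfib
  have hsplit : fib.card = (fib.filter (fun p => p.1 lst = 0)).card
      + (fib.filter (fun p => ¬ p.1 lst = 0)).card :=
    (Finset.card_filter_add_card_filter_not (s := fib) (fun p => p.1 lst = 0)).symm
  have h0 : fib.filter (fun p => p.1 lst = 0) = A0 ×ˢ B0 := by
    ext p
    constructor
    · intro hp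
      rw [Finset.mem_filter] at hp
      obtain ⟨hpf, hz⟩ := hp
      rw [hfib, Finset.mem_filter] at hpf
      obtain ⟨hpd, hsupp⟩ := hpf
      rw [disjPairs, Finset.mem_filter, Finset.mem_product] at hpd
      obtain ⟨⟨hp1, hp2⟩, hd⟩ := hpd
      rw [hcond p.1] at hsupp
      rw [Finset.mem_product, hA0, hB0, Finset.mem_filter, Finset.mem_filter]
      refine ⟨⟨hp1, fun i => ?_⟩, hp2, fun i hi => ?_⟩
      · by_cases hil : i = lst
        · subst hil
          constructor
          · intro hne; exact absurd hz hne
          · intro hiS; exact absurd hiS hlstS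
        · exact hsupp i hil
      · rw [Finset.mem_sdiff] at hi
        push_neg at hi
        have hiS : i ∈ S := hi (Finset.mem_univ i)
        rcases hd i with h | h
        · have hine : i ≠ lst := fun e => hlstS (e ▸ hiS)
          exact absurd ((hsupp i hine).mpr hiS) (by simp [h])
        · exact h
    · intro hp
      rw [Finset.mem_product, hA0, hB0, Finset.mem_filter, Finset.mem_filter] at hp
      obtain ⟨⟨hp1, hsupp⟩, hp2, hzo⟩ := hp
      have hz2 : ∀ i ∈ S, p.2 i = 0 := by
        intro i hi
        apply hzo
        rw [Finset.mem_sdiff]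
        push_neg
        intro _; exact hi
      rw [Finset.mem_filter, hfib, Finset.mem_filter, disjPairs, Finset.mem_filter,
        Finset.mem_product, hcond p.1]
      refine ⟨⟨⟨⟨hp1, hp2⟩, fun i => ?_⟩, fun i _ => hsupp i⟩, ?_⟩
      · by_cases h1 : p.1 i = 0
        · exact Or.inl h1
        · exact Or.inr (hz2 i ((hsupp i).mp h1))
      · by_contra hne
        exact hlstS ((hsupp lst).mp hne)
  have h1 : fib.filter (fun p => ¬ p.1 lst = 0) = A1 ×ˢ B1 := by
    ext p
    constructor
    · intro hp
      rw [Finset.mem_filter] at hp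
      obtain ⟨hpf, hz⟩ := hp
      rw [hfib, Finset.mem_filter] at hpf
      obtain ⟨hpd, hsupp⟩ := hpf
      rw [disjPairs, Finset.mem_filter, Finset.mem_product] at hpd
      obtain ⟨⟨hp1, hp2⟩, hd⟩ := hpd
      rw [hcond p.1] at hsupp
      rw [Finset.mem_product, hA1, hB1, Finset.mem_filter, Finset.mem_filter]
      refine ⟨⟨hp1, fun i => ?_⟩, hp2, fun i hi => ?_⟩
      · by_cases hil : i = lst
        · subst hil
          constructor
          · intro _; exact Finset.mem_insert_self lst S
          · intro _; exact hz
        · rw [Finset.mem_insert]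
          constructor
          · intro h; exact Or.inr ((hsupp i hil).mp h)
          · rintro (h | h)
            · exact absurd h hil
            · exact (hsupp i hil).mpr h
      · rw [Finset.mem_sdiff] at hi
        push_neg at hi
        have hiI : i ∈ insert lst S := hi (Finset.mem_univ i)
        rw [Finset.mem_insert] at hiI
        rcases hd i with h | h
        · rcases hiI with h2 | h2
          · subst h2; exact absurd h hz
          · have hine : i ≠ lst := fun e => hlstS (e ▸ h2)
            exact absurd ((hsupp i hine).mpr h2) (by simp [h])
        · exact h
    · intro hp
      rw [Finset.mem_product, hA1, hB1, Finset.mem_filter, Finset.mem_filter] at hp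
      obtain ⟨⟨hp1, hsupp⟩, hp2, hzo⟩ := hp
      have hz2 : ∀ i ∈ insert lst S, p.2 i = 0 := by
        intro i hi
        apply hzo
        rw [Finset.mem_sdiff]
        push_neg
        intro _; exact hi
      rw [Finset.mem_filter, hfib, Finset.mem_filter, disjPairs, Finset.mem_filter,
        Finset.mem_product, hcond p.1]
      refine ⟨⟨⟨⟨hp1, hp2⟩, fun i => ?_⟩, fun i hil => ?_⟩, ?_⟩
      · by_cases h1 : p.1 i = 0
        · exact Or.inl h1
        · exact Or.inr (hz2 i ((hsupp i).mp h1))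
      · rw [hsupp i, Finset.mem_insert]
        constructor
        · rintro (h | h)
          · exact absurd h hil
          · exact h
        · intro h; exact Or.inr h
      · exact (hsupp lst).mpr (Finset.mem_insert_self lst S)
  rw [hsplit, h0, h1, Finset.card_product, Finset.card_product]
  -- cardinality of B0
  by_cases hjm : S.card ≤ m
  · rw [if_pos hjm]
    have hB0card : B0.card = (m + (k + 1 - S.card)).choose (k + 1 - S.card) := by
      rw [hB0]
      apply card_supported
      rw [Finset.card_univ_diff, Fintype.card_fin]
      omega
    have hA1card : A1.card = (m - 1).choose S.card := by
      by_cases hj1 : S.card + 1 ≤ m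
      · rw [hA1]
        apply card_exact_support m S.card (insert lst S)
          (by rw [Finset.card_insert_of_notMem hlstS]) hj1
      · have hjem : S.card = m := by omega
        have : A1.card = 0 := by
          rw [hA1]
          apply card_exact_support_empty
          left
          rw [Finset.card_insert_of_notMem hlstS]
          omega
        rw [this, hjem, Nat.choose_eq_zero_of_lt (by omega)]
    by_cases hj0 : S.card = 0
    · have hS0 : S = ∅ := Finset.card_eq_zero.mp hj0
      have hA0card : A0.card = 0 := by
        rw [hA0]
        apply card_exact_support_empty
        right
        exact ⟨hS0, by omega⟩
      have hB1card : B1.card = (m + (k - S.card)).choose (k - S.card) := by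
        rw [hB1]
        apply card_supported
        rw [Finset.card_univ_diff, Fintype.card_fin,
          Finset.card_insert_of_notMem hlstS]
        omega
      rw [hA0card, hA1card, hB1card, hj0]
      simp
    · -- 1 ≤ S.card
      have hA0card : A0.card = (m - 1).choose (S.card - 1) := by
        rw [hA0]
        exact card_exact_support m (S.card - 1) S
          (by clear * - hj0; omega) (by clear * - hj0 hjm; omega)
      by_cases hjk : S.card ≤ k
      · have hB1card : B1.card = (m + (k - S.card)).choose (k - S.card) := by
          rw [hB1]
          have hc : (Finset.univ \ insert lst S).card = (k - S.card) + 1 := by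
            rw [Finset.card_univ_diff, Fintype.card_fin,
              Finset.card_insert_of_notMem hlstS]
            omega
          exact card_supported m (k - S.card) _ hc
        rw [hA0card, hA1card, hB0card, hB1card]
        exact star' S.card m k (by omega) hjm hjk
      · -- S.card = k + 1
        have hjek : S.card = k + 1 := by omega
        have hB1card : B1.card = 0 := by
          rw [hB1]
          apply card_supported_empty m (by omega)
          rw [← Finset.card_eq_zero, Finset.card_univ_diff,
            Fintype.card_fin, Finset.card_insert_of_notMem hlstS]
          omega
        rw [hA0card, hA1card, hB0card, hB1card, hjek]
        rw [show k + 1 - (k + 1) = 0 by omega, show k + 1 - 1 = k by omega,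
          show m - (k + 1) + k = m - 1 by omega]
        simp [Nat.choose_self]
  · rw [if_neg hjm]
    have hA0card : A0.card = 0 := by
      rw [hA0]
      apply card_exact_support_empty
      left
      omega
    have hA1card : A1.card = 0 := by
      rw [hA1]
      apply card_exact_support_empty
      left
      rw [Finset.card_insert_of_notMem hlstS]
      omega
    rw [hA0card, hA1card]
    simp

lemma partB (k m : ℕ) (hm : 1 ≤ m) :
    (disjPairs (k + 2) m).card
      = ∑ j ∈ Finset.range (min m (k + 1) + 1),
          ((k + 1).choose j) ^ 2 * ((m - j + k).choose k) := by
  set lst := Fin.last (k + 1) with hlst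
  rw [Finset.card_eq_sum_card_fiberwise
    (f := fun p => (Finset.univ.filter (fun i => p.1 i ≠ 0)).erase lst)
    (t := (Finset.univ.erase lst).powerset)
    (fun p _ => by
      rw [Finset.mem_coe, Finset.mem_powerset]
      exact Finset.erase_subset_erase lst (Finset.filter_subset _ _))]
  rw [Finset.sum_congr rfl (fun S hS => fiber_card k m hm S (Finset.mem_powerset.mp hS))]
  rw [Finset.sum_powerset_apply_card
    (f := fun j => if j ≤ m then (k + 1).choose j * ((m - j + k).choose k) else 0)]
  rw [Finset.card_erase_of_mem (Finset.mem_univ lst), Finset.card_univ, Fintype.card_fin]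
  have hterm : ∀ j, j ≤ m →
      (k + 1).choose j • (if j ≤ m then (k + 1).choose j * ((m - j + k).choose k) else 0)
        = ((k + 1).choose j) ^ 2 * ((m - j + k).choose k) := by
    intro j hj
    rw [if_pos hj, smul_eq_mul, pow_two, mul_assoc]
  rcases le_or_gt (k + 1) m with h | h
  · rw [min_eq_right h]
    rw [show k + 2 - 1 + 1 = k + 1 + 1 by omega]
    exact Finset.sum_congr rfl (fun j hj => hterm j (by rw [Finset.mem_range] at hj; omega))
  · rw [min_eq_left (by omega)]
    rw [show k + 2 - 1 + 1 = k + 1 + 1 by omega]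
    rw [← Finset.sum_subset (Finset.range_subset_range.mpr (by omega : m + 1 ≤ k + 1 + 1))
      (fun j _ hj => by
        rw [Finset.mem_range, Nat.lt_succ_iff, not_le] at hj
        rw [if_neg (by omega), smul_zero])]
    exact Finset.sum_congr rfl (fun j hj => hterm j (by rw [Finset.mem_range] at hj; omega))

lemma disjPairs_zero (q : ℕ) : (disjPairs q 0).card = 1 := by
  have : disjPairs q 0 = {((0 : Fin q → ℕ), (0 : Fin q → ℕ))} := by
    ext p
    simp only [disjPairs, simplex, Finset.Nat.antidiagonalTuple_zero_right,
      Finset.mem_filter, Finset.mem_product, Finset.mem_singleton, Prod.ext_iff]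
    constructor
    · rintro ⟨⟨h1, h2⟩, _⟩
      exact ⟨h1, h2⟩
    · rintro ⟨h1, h2⟩
      refine ⟨⟨h1, h2⟩, fun i => ?_⟩
      left
      rw [h1]
      rfl
  rw [this, Finset.card_singleton]

/-- Exact pair enumerator: `A_{n,q}(m) = c_{q,m} · binomial (n-m+q-1) (q-1)`,
where `c_{q,m} = Σ_{j=0}^{min(m,q-1)} binomial(q-1,j)² · binomial(m-j+q-2,q-2)`. -/
theorem pair_enumerator (n q m : ℕ) (hq : 2 ≤ q) (hm : m ≤ n) :
    (((simplex n q) ×ˢ (simplex n q)).filter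
        (fun p => delDist p.1 p.2 = m)).card
      = (∑ j ∈ Finset.range (min m (q - 1) + 1),
            ((q - 1).choose j) ^ 2 * ((m - j + q - 2).choose (q - 2)))
        * ((n - m + q - 1).choose (q - 1)) := by
  obtain ⟨k, rfl⟩ : ∃ k, q = k + 2 := ⟨q - 2, by omega⟩
  rw [partA n (k + 2) m hm, card_simplex (n - m) (k + 1)]
  simp only [show k + 2 - 1 = k + 1 by omega, show k + 2 - 2 = k by omega,
    show ∀ j : ℕ, m - j + (k + 2) - 2 = m - j + k from fun j => by omega,
    show n - m + (k + 2) - 1 = n - m + (k + 1) by omega]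
  congr 1
  rcases Nat.eq_zero_or_pos m with h0 | hpos
  · subst h0
    rw [disjPairs_zero]
    rw [show min 0 (k + 1) = 0 by omega, Finset.sum_range_one]
    simp [Nat.choose_self]
  · exact partB k m hpos
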